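/- For any AMP CG G, any connectivity component K of G, any A ∈ K, and any B ∈ pa_G(K) with A ← B not an edge of G, the separation A ⊥_G B | pa_G(A) holds in the AMP interpretation of G. -/

import Mathlib

/- Mixed graphs with directed and undirected edges. -/
structure MixedGraph (γ : Type*) where
  dir : γ → γ → Prop
  undir : γ → γ → Prop
  undir_symm : ∀ a b, undir a b → undir b a

namespace MixedGraph

variable {β : Type*} (G : MixedGraph β)

/-- Two nodes are adjacent if joined by some edge. -/
def adj (a b : β) : Prop := G.dir a b ∨ G.dir b a ∨ G.undir a b

/-- The graph is simple: no loops and at most one edge between any pair. -/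
def Simple : Prop :=
  (∀ a, ¬ G.dir a a) ∧ (∀ a, ¬ G.undir a a) ∧
  (∀ a b, G.dir a b → ¬ G.dir b a) ∧ (∀ a b, G.dir a b → ¬ G.undir a b)

/-- A semidirected cycle: a cycle whose first edge is directed and whose other
edges are directed or undirected (all pointing forwards). -/
def HasSemidirectedCycle : Prop :=
  ∃ (n : ℕ) (f : Fin (n + 2) → β),
    f 0 = f (Fin.last (n + 1)) ∧ G.dir (f 0) (f 1) ∧
    ∀ i : Fin (n + 1), G.dir (f i.castSucc) (f i.succ) ∨ G.undir (f i.castSucc) (f i.succ)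

/-- A chain graph: a simple graph with no semidirected cycle. -/
def IsChainGraph : Prop := G.Simple ∧ ¬ G.HasSemidirectedCycle

/-- A DAG: a chain graph with no undirected edges. -/
def IsDAG : Prop := G.IsChainGraph ∧ ∀ a b, ¬ G.undir a b

/-- Parents of a set of nodes. -/
def pa (X : Set β) : Set β := {v | v ∉ X ∧ ∃ x ∈ X, G.dir v x}

/-- Strict ascendants of a set of nodes (strictly descending route to the set). -/
def san (W : Set β) : Set β := {v | v ∉ W ∧ ∃ w ∈ W, Relation.TransGen G.dir v w}

/-- B is a triplex node between A and C: A → B ← C, A → B − C, or A − B ← C. -/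
def triplex (A B C : β) : Prop :=
  (G.dir A B ∧ G.dir C B) ∨ (G.dir A B ∧ G.undir B C) ∨ (G.undir A B ∧ G.dir C B)

/-- B is a non-triplex node between A and C. -/
def nontriplex (A B C : β) : Prop :=
  G.adj A B ∧ G.adj B C ∧ ¬ G.triplex A B C

/-- A route: a nonempty sequence of consecutively adjacent nodes. -/
def IsRoute (l : List β) : Prop := l ≠ [] ∧ l.Chain' G.adj

/-- A path that is open given the determined set `D` (AMP path-based semantics). -/
def AMPOpenPath (D : Set β) (l : List β) : Prop :=
  G.IsRoute l ∧ l.Nodup ∧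
  (∀ A B C, [A, B, C] <:+: l → G.triplex A B C → B ∈ D ∪ G.san D) ∧
  (∀ A B C, [A, B, C] <:+: l → G.nontriplex A B C → B ∈ D →
    (G.undir A B ∧ G.undir B C ∧ ∃ p ∈ G.pa {B}, p ∉ D))

/-- A route that is open given the determined set `D` (AMP route-based semantics). -/
def AMPOpenRoute (D : Set β) (l : List β) : Prop :=
  G.IsRoute l ∧
  (∀ A B C, [A, B, C] <:+: l → G.triplex A B C → B ∈ D) ∧
  (∀ A B C, [A, B, C] <:+: l → G.nontriplex A B C → B ∉ D)

/-- AMP separation (path-based) of X and Y given determined set D. -/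
def AMPSep (D X Y : Set β) : Prop :=
  ∀ (l : List β) (x y : β), x ∈ X → y ∈ Y → l.head? = some x → l.getLast? = some y →
    ¬ G.AMPOpenPath D l

/-- AMP separation (route-based) of X and Y given determined set D. -/
def AMPSepRoute (D X Y : Set β) : Prop :=
  ∀ (l : List β) (x y : β), x ∈ X → y ∈ Y → l.head? = some x → l.getLast? = some y →
    ¬ G.AMPOpenRoute D l

/-- `s` is a collider section of the route `l`: a maximal undirected subroute of `l`
entered by arrowheads at both ends. -/
def IsColliderSection (l s : List β) : Prop :=
  s ≠ [] ∧ List.Chain' G.undir s ∧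
  ∃ pre post A C, l = pre ++ s ++ post ∧
    pre.getLast? = some A ∧ post.head? = some C ∧
    (∀ b, s.head? = some b → G.dir A b) ∧ (∀ b, s.getLast? = some b → G.dir C b) ∧
    (∀ a b, pre.getLast? = some a → s.head? = some b → ¬ G.undir a b) ∧
    (∀ a b, s.getLast? = some a → post.head? = some b → ¬ G.undir a b)

/-- `s` is a non-collider section of the route `l`: a maximal undirected subroute of `l`
not entered by arrowheads at both ends. -/
def IsNonColliderSection (l s : List β) : Prop :=
  s ≠ [] ∧ List.Chain' G.undir s ∧
  ∃ pre post, l = pre ++ s ++ post ∧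
    (∀ a b, pre.getLast? = some a → s.head? = some b → ¬ G.undir a b) ∧
    (∀ a b, s.getLast? = some a → post.head? = some b → ¬ G.undir a b) ∧
    ¬ ((∃ A, pre.getLast? = some A ∧ ∀ b, s.head? = some b → G.dir A b) ∧
       (∃ C, post.head? = some C ∧ ∀ b, s.getLast? = some b → G.dir C b))

/-- A route that is open given the determined set `D` (LWF semantics). -/
def LWFOpenRoute (D : Set β) (l : List β) : Prop :=
  G.IsRoute l ∧
  (∀ s, G.IsColliderSection l s → ∃ x ∈ s, x ∈ D) ∧
  (∀ s, G.IsNonColliderSection l s → ∀ x ∈ s, x ∉ D)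

/-- LWF separation of X and Y given determined set D. -/
def LWFSep (D X Y : Set β) : Prop :=
  ∀ (l : List β) (x y : β), x ∈ X → y ∈ Y → l.head? = some x → l.getLast? = some y →
    ¬ G.LWFOpenRoute D l

/-- Closure of Z under a set `det` of deterministic relationships: `(S, a) ∈ det`
means that `a` is a function of `S`. -/
inductive Determined (det : Set (Set β × β)) (Z : Set β) : β → Prop
  | base : ∀ a, a ∈ Z → Determined det Z a
  | step : ∀ (S : Set β) (a : β), (S, a) ∈ det → (∀ b ∈ S, Determined det Z b) →
      Determined det Z a

/-- The set D(Z) of nodes determined by Z. -/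
def DSet (det : Set (Set β × β)) (Z : Set β) : Set β := {a | Determined det Z a}

end MixedGraph

section EAMP

variable {α : Type*}

/-- Directed edges of the EAMP CG: `inl` nodes are the original nodes,
`inr` nodes are the error nodes. -/
def eampDir (G : MixedGraph α) : (α ⊕ α) → (α ⊕ α) → Prop
  | Sum.inl x, Sum.inl y => G.dir x y
  | Sum.inr x, Sum.inl y => x = y
  | _, _ => False

/-- Undirected edges of the EAMP CG: `ε^A − ε^B` for each `A − B` of G. -/
def eampUndir (G : MixedGraph α) : (α ⊕ α) → (α ⊕ α) → Prop
  | Sum.inr x, Sum.inr y => G.undir x y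
  | _, _ => False

/-- The EAMP CG G' of an AMP CG G: add `ε^A → A` for each node A and replace
each undirected edge `A − B` by `ε^A − ε^B`. -/
def eamp (G : MixedGraph α) : MixedGraph (α ⊕ α) where
  dir := eampDir G
  undir := eampUndir G
  undir_symm := by
    rintro (x | x) (y | y) h <;>
      simp only [eampUndir] at h ⊢ <;>
      first
        | exact h.elim
        | exact G.undir_symm _ _ h

/-- The parents of A in G, embedded as nodes of the EAMP CG. -/
def eampPa (G : MixedGraph α) (A : α) : Set (α ⊕ α) := {x | ∃ B, G.dir B A ∧ x = Sum.inl B}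

/-- The deterministic relationships of the EAMP CG: each A is a function of
`pa_G(A) ∪ {ε^A}`, and each `ε^A` is a function of `pa_G(A) ∪ {A}`. -/
def eampDet (G : MixedGraph α) : Set (Set (α ⊕ α) × (α ⊕ α)) :=
  {p | (∃ A, p = (eampPa G A ∪ {Sum.inr A}, Sum.inl A)) ∨
       (∃ A, p = (eampPa G A ∪ {Sum.inl A}, Sum.inr A))}

/-- Marginalize the node B out of G: add `A → C` for every pair `A → B`, `B → C`,
then delete B together with all edges it participates in. -/
def marg {β : Type*} (G : MixedGraph β) (B : β) : MixedGraph β where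
  dir a c := a ≠ B ∧ c ≠ B ∧ (G.dir a c ∨ (G.dir a B ∧ G.dir B c))
  undir a c := a ≠ B ∧ c ≠ B ∧ G.undir a c
  undir_symm := by
    rintro a c ⟨h1, h2, h3⟩
    exact ⟨h2, h1, G.undir_symm _ _ h3⟩

/-- Marginalize a list of nodes out of G, one at a time. -/
def margList {β : Type*} (G : MixedGraph β) (L : List β) : MixedGraph β := L.foldl marg G

/-- Directed edges of the DAG G'': those of G' among `V ∪ ε`, plus
`ε^A → S_{ε^Aε^B} ← ε^B` for each undirected edge `ε^A − ε^B` of G'. -/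
def dagDir (G : MixedGraph α) : ((α ⊕ α) ⊕ Sym2 α) → ((α ⊕ α) ⊕ Sym2 α) → Prop
  | Sum.inl x, Sum.inl y => (eamp G).dir x y
  | Sum.inl (Sum.inr x), Sum.inr s => ∃ y, G.undir x y ∧ s = s(x, y)
  | _, _ => False

/-- The DAG G'' obtained from G' by replacing each `ε^A − ε^B` with
`ε^A → S_{ε^Aε^B} ← ε^B`, where the selection nodes are fresh. -/
def dagOf (G : MixedGraph α) : MixedGraph ((α ⊕ α) ⊕ Sym2 α) where
  dir := dagDir G
  undir _ _ := False
  undir_symm := by intro a b h; exact h.elim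

/-- The set S of selection nodes of G''. -/
def selNodes (G : MixedGraph α) : Set ((α ⊕ α) ⊕ Sym2 α) :=
  {v | ∃ x y, G.undir x y ∧ v = Sum.inr s(x, y)}

/-- The deterministic relationships of G'' (the same as those of G'). -/
def dagDet (G : MixedGraph α) : Set (Set ((α ⊕ α) ⊕ Sym2 α) × ((α ⊕ α) ⊕ Sym2 α)) :=
  {p | ∃ q ∈ eampDet G, p = (Sum.inl '' q.1, Sum.inl q.2)}

/-- Structural characterization of EAMP CGs over `W ∪ ε`: a chain graph whose
undirected edges join only error nodes and whose error nodes have no incoming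
directed edges. -/
def IsEAMPStruct (G : MixedGraph (α ⊕ α)) : Prop :=
  G.IsChainGraph ∧
  (∀ a b, G.undir a b → (∃ x, a = Sum.inr x) ∧ ∃ y, b = Sum.inr y) ∧
  (∀ a x, ¬ G.dir a (Sum.inr x))

/-- K is a connectivity component: a maximal set connected by undirected paths. -/
def IsConnComp {β : Type*} (G : MixedGraph β) (K : Set β) : Prop :=
  ∃ a, K = {b | Relation.ReflTransGen G.undir a b}

end EAMP


section Stmt18Aux

variable {α : Type*} (G : MixedGraph α)

/-- A single semidirected step. -/
private def SemiStep (a b : α) : Prop := G.dir a b ∨ G.undir a b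

private lemma no_back (hNoCyc : ¬ G.HasSemidirectedCycle) {a b : α} (hd : G.dir a b)
    (hw : Relation.ReflTransGen (SemiStep G) b a) : False := by
  obtain ⟨l, hc, hl⟩ := List.exists_isChain_cons_of_relationReflTransGen hw
  apply hNoCyc
  have hlen : l.length + 2 = (a :: b :: l).length := by simp
  refine ⟨l.length, fun i => (a :: b :: l).get (Fin.cast hlen i), ?_, ?_, ?_⟩
  · show a = (a :: b :: l).get ⟨l.length + 1, by simp⟩
    rw [List.getLast_eq_getElem] at hl
    have : (a :: b :: l).get ⟨l.length + 1, by simp⟩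
        = (b :: l).get ⟨(b :: l).length - 1, by simp⟩ := by
      simp [List.get_eq_getElem]
    rw [this]; exact hl.symm
  · exact hd
  · intro i
    have hch : List.Chain' (SemiStep G) (a :: b :: l) := List.IsChain.cons_cons (Or.inl hd) hc
    replace hch := List.isChain_iff_getElem.mp hch
    exact hch i.val (by simpa using i.isLt)

private lemma no_back' (hNoCyc : ¬ G.HasSemidirectedCycle) {a b : α}
    (ht : Relation.TransGen G.dir a b)
    (hw : Relation.ReflTransGen (SemiStep G) b a) : False := by
  obtain ⟨c, hac, hcb⟩ := Relation.TransGen.tail'_iff.mp ht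
  exact no_back G hNoCyc hcb
    (hw.trans (Relation.ReflTransGen.mono (p := SemiStep G) (fun x y h => Or.inl h) _ _ hac))

private lemma triple_infix (l : List α) (i : ℕ) (h : i + 2 < l.length) :
    [l.get ⟨i, by omega⟩, l.get ⟨i + 1, by omega⟩, l.get ⟨i + 2, h⟩] <:+: l := by
  have hd : l.drop i
      = l.get ⟨i, by omega⟩ :: l.get ⟨i + 1, by omega⟩ :: l.get ⟨i + 2, h⟩ :: l.drop (i + 3) := by
    rw [List.drop_eq_getElem_cons (by omega : i < l.length),
      List.drop_eq_getElem_cons (by omega : i + 1 < l.length),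
      List.drop_eq_getElem_cons (by omega : i + 2 < l.length)]
    simp [List.get_eq_getElem]
  have hp : [l.get ⟨i, by omega⟩, l.get ⟨i + 1, by omega⟩, l.get ⟨i + 2, h⟩] <+: l.drop i :=
    ⟨l.drop (i + 3), by rw [hd]; rfl⟩
  exact hp.isInfix.trans (List.drop_suffix i l).isInfix

end Stmt18Aux

/-- for any connectivity component K of an AMP CG G, any `A ∈ K`
and any `B ∈ pa_G(K)` with `A ← B` not an edge of G,
`A ⊥_G B | pa_G(A)` in the AMP interpretation of G. -/
theorem stmt18 {α : Type*} (G : MixedGraph α) (hG : G.IsChainGraph)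
    (K : Set α) (hK : IsConnComp G K)
    (A B : α) (hA : A ∈ K) (hB : B ∈ G.pa K) (hne : ¬ G.dir B A) :
    G.AMPSep (G.pa {A}) {A} {B} := by
  obtain ⟨⟨hs1, hs2, hs3, hs4⟩, hNoCyc⟩ := hG
  obtain ⟨a0, hK0⟩ := hK
  obtain ⟨hBK, x0, hx0K, hBx0⟩ := hB
  intro l x y hx hy hhead hlast hopen
  rw [Set.mem_singleton_iff] at hx hy
  rw [hx] at hhead
  rw [hy] at hlast
  clear hx hy
  obtain ⟨⟨hlne, hchain⟩, hnodup, htrip, hnontrip⟩ := hopen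
  replace hchain := List.isChain_iff_getElem.mp hchain
  have hlpos : 0 < l.length := List.length_pos_iff.mpr hlne
  have hget0 : ∀ (h : 0 < l.length), l.get ⟨0, h⟩ = A := by
    intro h
    cases l with
    | nil => simp at hlne
    | cons hd tl => simp only [List.head?] at hhead; simp [Option.some.inj hhead]
  have hgetlast : ∀ (h : l.length - 1 < l.length), l.get ⟨l.length - 1, h⟩ = B := by
    intro h
    rw [List.getLast?_eq_getLast hlne] at hlast
    rw [List.getLast_eq_getElem] at hlast
    exact Option.some.inj hlast
  have key : ∀ i, ∀ (h : i < l.length),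
      Relation.ReflTransGen (SemiStep G) A (l.get ⟨i, h⟩) ∧
      ∀ (h2 : i + 1 < l.length), SemiStep G (l.get ⟨i, h⟩) (l.get ⟨i + 1, h2⟩) := by
    intro i
    induction i with
    | zero =>
      intro h
      refine ⟨by rw [hget0 h], ?_⟩
      intro h2
      rcases hchain 0 (by omega) with hE | hE | hE
      · exact Or.inl hE
      · exfalso
        have hvA : G.dir (l.get ⟨1, h2⟩) A := by rw [← hget0 h]; exact hE
        have hvD : l.get ⟨1, h2⟩ ∈ G.pa {A} := by
          refine ⟨?_, A, rfl, hvA⟩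
          intro hmem
          rw [Set.mem_singleton_iff] at hmem
          rw [hmem] at hvA
          exact hs1 A hvA
        by_cases hlen2 : 2 < l.length
        · have hinf := triple_infix l 0 hlen2
          rw [hget0] at hinf
          have hnt : G.nontriplex A (l.get ⟨1, by omega⟩) (l.get ⟨2, hlen2⟩) := by
            refine ⟨Or.inr (Or.inl hvA), hchain 1 (by omega), ?_⟩
            rintro (⟨h1, _⟩ | ⟨h1, _⟩ | ⟨h1, _⟩)
            · exact hs3 A _ h1 hvA
            · exact hs3 A _ h1 hvA
            · exact hs4 _ A hvA (G.undir_symm A _ h1)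
          obtain ⟨hu, -, -⟩ := hnontrip A _ _ hinf hnt hvD
          exact hs4 _ A hvA (G.undir_symm A _ hu)
        · have hl2 : l.length = 2 := by omega
          have hvB : l.get ⟨1, h2⟩ = B := by
            have := hgetlast (by omega)
            simp only [hl2] at this
            exact this
          rw [hvB] at hvA
          exact hne hvA
      · exact Or.inr hE
    | succ i ih =>
      intro h
      have hi : i < l.length := by omega
      obtain ⟨ihw, ihe⟩ := ih hi
      have hei := ihe h
      have hw' : Relation.ReflTransGen (SemiStep G) A (l.get ⟨i + 1, h⟩) := ihw.tail hei
      refine ⟨hw', ?_⟩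
      intro h2
      rcases hchain (i + 1) (by omega) with hE | hE | hE
      · exact Or.inl hE
      · exfalso
        have htl : G.triplex (l.get ⟨i, hi⟩) (l.get ⟨i + 1, h⟩) (l.get ⟨i + 2, h2⟩) := by
          rcases hei with hd' | hu'
          · exact Or.inl ⟨hd', hE⟩
          · exact Or.inr (Or.inr ⟨hu', hE⟩)
        have hmem := htrip _ _ _ (triple_infix l i h2) htl
        have htg : Relation.TransGen G.dir (l.get ⟨i + 1, h⟩) A := by
          rcases hmem with hm | hm
          · obtain ⟨-, w, hwA, hdw⟩ := hm
            rw [Set.mem_singleton_iff] at hwA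
            rw [hwA] at hdw
            exact Relation.TransGen.single hdw
          · obtain ⟨-, w, hwD, htw⟩ := hm
            obtain ⟨-, z, hzA, hdz⟩ := hwD
            rw [Set.mem_singleton_iff] at hzA
            rw [hzA] at hdz
            exact htw.tail hdz
        exact no_back' G hNoCyc htg hw'
      · exact Or.inr hE
  have hAB : Relation.ReflTransGen (SemiStep G) A B := by
    have := (key (l.length - 1) (by omega)).1
    rwa [hgetlast] at this
  have hsym : Symmetric G.undir := fun {a b} hab => G.undir_symm a b hab
  have ha0A : Relation.ReflTransGen G.undir a0 A := by rw [hK0] at hA; exact hA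
  have ha0x : Relation.ReflTransGen G.undir a0 x0 := by rw [hK0] at hx0K; exact hx0K
  have hx0A : Relation.ReflTransGen G.undir x0 A :=
    (haveI : Std.Symm G.undir := ⟨fun a b h => hsym h⟩; Std.Symm.symm (r := Relation.ReflTransGen G.undir) _ _ ha0x).trans ha0A
  have hx0B : Relation.ReflTransGen (SemiStep G) x0 B :=
    (Relation.ReflTransGen.mono (p := SemiStep G) (fun a b hab => Or.inr hab) _ _ hx0A).trans hAB
  exact no_back G hNoCyc hBx0 hx0B
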